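/- Let S be a finite semigroup such that for every s ∈ S there exists t ∈ S with st = s or ts = s. Then every subdirect product T ≤ ℕ × S (that is, every subsemigroup of ℕ × S whose projections to ℕ and to S are both surjective) is finitely generated. -/

import Mathlib

/-- Let `S` be a finite semigroup in which every element has a relative left
or right identity.  Then every subdirect product `T ≤ ℕ × S` (a subsemigroup
projecting onto both factors) is finitely generated. -/
theorem subdirect_product_fg
    {S : Type*} [Semigroup S] [Finite S]
    (h : ∀ s : S, ∃ t : S, s * t = s ∨ t * s = s)
    (T : Subsemigroup (Multiplicative ℕ+ × S))
    (hproj1 : ∀ n : Multiplicative ℕ+, ∃ p ∈ T, p.1 = n)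
    (hproj2 : ∀ s : S, ∃ p ∈ T, p.2 = s) :
    ∃ X : Finset (Multiplicative ℕ+ × S),
      ↑X ⊆ (T : Set (Multiplicative ℕ+ × S)) ∧ Subsemigroup.closure ↑X = T := by
  classical
  have : Fintype S := Fintype.ofFinite S
  choose t ht using h
  choose p hpT hp2 using fun s => hproj2 (t s)
  -- μ s : ℕ+ additive value of first coordinate of p s
  set μ : S → ℕ+ := fun s => Multiplicative.toAdd (p s).1 with hμ
  set m : S → ℕ := fun s => (μ s : ℕ) with hm
  have hmpos : ∀ s, 0 < m s := fun s => (μ s).pos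
  -- the sets of ℕ-values occurring with s, in residue class r mod m s
  set A : S → ℕ → Set ℕ :=
    fun s r => {n : ℕ | 0 < n ∧ (Multiplicative.ofAdd n.toPNat', s) ∈ T ∧ n % m s = r} with hA
  set B : ℕ :=
    Finset.univ.sup (fun s => ((Finset.range (m s)).sup fun r => sInf (A s r)) + m s) with hB
  have hmB : ∀ s, m s ≤ B := fun s =>
    le_trans (Nat.le_add_left _ _) (Finset.le_sup (f := fun s => ((Finset.range (m s)).sup fun r => sInf (A s r)) + m s) (Finset.mem_univ s))
  have haB : ∀ s r, r < m s → sInf (A s r) ≤ B := by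
    intro s r hr
    refine le_trans ?_ (Finset.le_sup (f := fun s => ((Finset.range (m s)).sup fun r => sInf (A s r)) + m s) (Finset.mem_univ s))
    exact le_trans (Finset.le_sup (f := fun r => sInf (A s r)) (Finset.mem_range.mpr hr)) (Nat.le_add_right _ _)
  -- the finite generating set
  have hfin : Set.Finite {q : Multiplicative ℕ+ × S | q ∈ T ∧ ((Multiplicative.toAdd q.1 : ℕ+) : ℕ) ≤ B} := by
    apply Set.Finite.subset (Set.Finite.prod
      (Set.Finite.preimage (fun a _ b _ hab => Multiplicative.toAdd.injective hab)
        (Set.finite_Iic (B.toPNat' : ℕ+))) (Set.finite_univ (α := S)))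
    rintro ⟨x, s⟩ ⟨-, hx⟩
    dsimp only at hx
    refine ⟨Set.mem_preimage.mpr ?_, trivial⟩
    simp only [Set.mem_Iic]
    have : ((Multiplicative.toAdd x : ℕ+) : ℕ) ≤ (B.toPNat' : ℕ+) := by
      rw [Nat.toPNat'_coe]
      split <;> omega
    exact_mod_cast this
  refine ⟨hfin.toFinset, ?_, ?_⟩
  · intro q hq
    simp only [Set.Finite.coe_toFinset, Set.mem_setOf_eq] at hq
    exact hq.1
  have hXT : (hfin.toFinset : Set (Multiplicative ℕ+ × S)) ⊆ T := by
    intro q hq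
    simp only [Set.Finite.coe_toFinset, Set.mem_setOf_eq] at hq
    exact hq.1
  have hXmem : ∀ (n : ℕ) (hn : 0 < n) (s : S), (Multiplicative.ofAdd n.toPNat', s) ∈ T → n ≤ B →
      (Multiplicative.ofAdd n.toPNat', s) ∈ Subsemigroup.closure (hfin.toFinset : Set (Multiplicative ℕ+ × S)) := by
    intro n hn s hT hle
    apply Subsemigroup.subset_closure
    simp only [Set.Finite.coe_toFinset, Set.mem_setOf_eq]
    refine ⟨hT, ?_⟩
    simp [Nat.toPNat'_coe, hn, hle]
  -- p s is a generator
  have hpX : ∀ s, p s ∈ Subsemigroup.closure (hfin.toFinset : Set (Multiplicative ℕ+ × S)) := by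
    intro s
    apply Subsemigroup.subset_closure
    simp only [Set.Finite.coe_toFinset, Set.mem_setOf_eq]
    exact ⟨hpT s, hmB s⟩
  -- step lemma
  have key : ∀ (s : S) (x : ℕ+), (Multiplicative.ofAdd x, s) ∈ Subsemigroup.closure (hfin.toFinset : Set (Multiplicative ℕ+ × S)) →
      (Multiplicative.ofAdd (x + μ s), s) ∈ Subsemigroup.closure (hfin.toFinset : Set (Multiplicative ℕ+ × S)) := by
    intro s x hx
    have hp1 : (p s).1 = Multiplicative.ofAdd (μ s) := rfl
    rcases ht s with hst | hts
    · have := Subsemigroup.mul_mem _ hx (hpX s)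
      have heq : (Multiplicative.ofAdd x, s) * p s = (Multiplicative.ofAdd (x + μ s), s) := by
        rw [show p s = ((p s).1, (p s).2) from rfl, Prod.mk_mul_mk, hp1, hp2 s, ← ofAdd_add, hst]
      rwa [heq] at this
    · have := Subsemigroup.mul_mem _ (hpX s) hx
      have heq : p s * (Multiplicative.ofAdd x, s) = (Multiplicative.ofAdd (x + μ s), s) := by
        rw [show p s = ((p s).1, (p s).2) from rfl, Prod.mk_mul_mk, hp1, hp2 s, ← ofAdd_add, hts,
          add_comm]
      rwa [heq] at this
  -- iterated step lemma
  have iter : ∀ (k : ℕ) (s : S) (a : ℕ), 0 < a →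
      (Multiplicative.ofAdd a.toPNat', s) ∈ Subsemigroup.closure (hfin.toFinset : Set (Multiplicative ℕ+ × S)) →
      (Multiplicative.ofAdd (a + k * m s).toPNat', s) ∈ Subsemigroup.closure (hfin.toFinset : Set (Multiplicative ℕ+ × S)) := by
    intro k
    induction k with
    | zero => intro s a ha hmem; simpa using hmem
    | succ k ih =>
      intro s a ha hmem
      have h1 := key s (a + k * m s).toPNat' (ih s a ha hmem)
      have heq : (a + k * m s).toPNat' + μ s = (a + (k + 1) * m s).toPNat' := by
        apply PNat.coe_injective
        push_cast [Nat.toPNat'_coe]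
        have h2 : 0 < a + k * m s := by omega
        have h3 : 0 < a + (k + 1) * m s := by omega
        simp only [h2, h3, if_true]
        ring
      rwa [heq] at h1
  refine le_antisymm ((Subsemigroup.closure_le).mpr hXT) ?_
  rintro ⟨x, s⟩ hq
  set n : ℕ := ((Multiplicative.toAdd x : ℕ+) : ℕ) with hn
  have hnpos : 0 < n := (Multiplicative.toAdd x).pos
  have hxn : x = Multiplicative.ofAdd n.toPNat' := by
    have : (Multiplicative.toAdd x : ℕ+) = n.toPNat' := by
      apply PNat.coe_injective
      simp [Nat.toPNat'_coe, hnpos]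
      exact hn.symm
    rw [← this]; rfl
  have hnA : n ∈ A s (n % m s) := by
    refine ⟨hnpos, ?_, rfl⟩
    rwa [← hxn]
  have hne : (A s (n % m s)).Nonempty := ⟨n, hnA⟩
  set a : ℕ := sInf (A s (n % m s)) with haa
  have haA : a ∈ A s (n % m s) := Nat.sInf_mem hne
  have han : a ≤ n := Nat.sInf_le hnA
  have haB' : a ≤ B := haB s (n % m s) (Nat.mod_lt _ (hmpos s))
  have hdvd : m s ∣ n - a := (Nat.modEq_iff_dvd' han).mp haA.2.2
  obtain ⟨k, hk⟩ := hdvd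
  have hnk : n = a + k * m s := by
    have hk' : n - a = k * m s := by rw [hk, Nat.mul_comm]
    omega
  have hfinal := iter k s a haA.1 (hXmem a haA.1 s haA.2.1 haB')
  rw [← hnk] at hfinal
  rwa [hxn]
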